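/- A finite union of pairwise disjoint compact subsets of ℂ, each with connected complement, is polynomially convex (equivalently, has connected complement). -/

import Mathlib

/-- A compact set `K ⊆ ℂ` is polynomially convex if for every `z ∉ K` there is a
polynomial `p` with `|p(z)| > |p(ζ)|` for all `ζ ∈ K`. -/
def PolyConvex₁ (K : Set ℂ) : Prop :=
  IsCompact K ∧ ∀ z ∉ K, ∃ p : Polynomial ℂ,
    ∀ w ∈ K, ‖Polynomial.eval w p‖ < ‖Polynomial.eval z p‖

open Complex Metric Set Polynomial

/-- `f` is uniformly approximable by polynomials on `M`. -/
def Approx (M : Set ℂ) (f : ℂ → ℂ) : Prop :=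
  ∀ ε > (0:ℝ), ∃ p : Polynomial ℂ, ∀ w ∈ M, ‖f w - p.eval w‖ ≤ ε

lemma Approx.of_eq {M : Set ℂ} {f g : ℂ → ℂ} (hf : Approx M f) (h : ∀ w ∈ M, f w = g w) :
    Approx M g := by
  intro ε hε
  obtain ⟨p, hp⟩ := hf ε hε
  exact ⟨p, fun w hw => by rw [← h w hw]; exact hp w hw⟩

lemma approx_poly (M : Set ℂ) (p : Polynomial ℂ) : Approx M (fun w => p.eval w) :=
  fun ε hε => ⟨p, fun w _ => by simp [hε.le]⟩

lemma Approx.add {M : Set ℂ} {f g : ℂ → ℂ} (hf : Approx M f) (hg : Approx M g) :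
    Approx M (fun w => f w + g w) := by
  intro ε hε
  obtain ⟨p, hp⟩ := hf (ε/2) (by positivity)
  obtain ⟨q, hq⟩ := hg (ε/2) (by positivity)
  refine ⟨p + q, fun w hw => ?_⟩
  have h1 : f w + g w - (p + q).eval w = (f w - p.eval w) + (g w - q.eval w) := by
    simp only [Polynomial.eval_add]; ring
  rw [h1]
  calc ‖(f w - p.eval w) + (g w - q.eval w)‖ ≤ ‖f w - p.eval w‖ + ‖g w - q.eval w‖ :=
        norm_add_le _ _
    _ ≤ ε/2 + ε/2 := add_le_add (hp w hw) (hq w hw)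
    _ = ε := by ring

lemma Approx.mul {M : Set ℂ} {f g : ℂ → ℂ} {Bf Bg : ℝ} (hf : Approx M f) (hg : Approx M g)
    (hBf : ∀ w ∈ M, ‖f w‖ ≤ Bf) (hBg : ∀ w ∈ M, ‖g w‖ ≤ Bg) :
    Approx M (fun w => f w * g w) := by
  intro ε hε
  rcases M.eq_empty_or_nonempty with rfl | hne
  · exact ⟨0, by simp⟩
  set A := max Bf 0 + 1 with hA
  set B := max Bg 0 + 1 with hB
  have hA0 : (0:ℝ) < A := by positivity
  have hB0 : (0:ℝ) < B := by positivity
  have hfA : ∀ w ∈ M, ‖f w‖ ≤ A := fun w hw =>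
    le_trans (hBf w hw) (by rw [hA]; linarith [le_max_left Bf (0:ℝ)])
  have hgB : ∀ w ∈ M, ‖g w‖ ≤ B := fun w hw =>
    le_trans (hBg w hw) (by rw [hB]; linarith [le_max_left Bg (0:ℝ)])
  obtain ⟨q, hq⟩ := hg (min 1 (ε/(2*A))) (by positivity)
  obtain ⟨p, hp⟩ := hf (ε/(2*(B+1))) (by positivity)
  refine ⟨p * q, fun w hw => ?_⟩
  have hqB : ‖q.eval w‖ ≤ B + 1 := by
    have := hq w hw
    have h2 : ‖q.eval w‖ ≤ ‖g w‖ + ‖g w - q.eval w‖ := by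
      calc ‖q.eval w‖ = ‖g w - (g w - q.eval w)‖ := by ring_nf
        _ ≤ ‖g w‖ + ‖g w - q.eval w‖ := norm_sub_le _ _
    calc ‖q.eval w‖ ≤ ‖g w‖ + ‖g w - q.eval w‖ := h2
      _ ≤ B + min 1 (ε/(2*A)) := add_le_add (hgB w hw) this
      _ ≤ B + 1 := by simp [min_le_left]
  have key : f w * g w - (p*q).eval w
      = f w * (g w - q.eval w) + (f w - p.eval w) * q.eval w := by
    simp only [Polynomial.eval_mul]; ring
  rw [key]
  calc ‖f w * (g w - q.eval w) + (f w - p.eval w) * q.eval w‖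
      ≤ ‖f w * (g w - q.eval w)‖ + ‖(f w - p.eval w) * q.eval w‖ := norm_add_le _ _
    _ = ‖f w‖ * ‖g w - q.eval w‖ + ‖f w - p.eval w‖ * ‖q.eval w‖ := by
        rw [norm_mul, norm_mul]
    _ ≤ A * (ε/(2*A)) + (ε/(2*(B+1))) * (B+1) := by
        refine add_le_add (mul_le_mul (hfA w hw) (le_trans (hq w hw) (min_le_right _ _))
          (norm_nonneg _) hA0.le) (mul_le_mul (hp w hw) hqB (norm_nonneg _) (by positivity))
    _ = ε/2 + ε/2 := by field_simp
    _ = ε := by ring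

lemma Approx.const_mul {M : Set ℂ} {f : ℂ → ℂ} (c : ℂ) (hf : Approx M f) :
    Approx M (fun w => c * f w) := by
  intro ε hε
  rcases eq_or_ne c 0 with rfl | hc
  · exact ⟨0, by simp [hε.le]⟩
  obtain ⟨p, hp⟩ := hf (ε/‖c‖) (div_pos hε (norm_pos_iff.mpr hc))
  refine ⟨Polynomial.C c * p, fun w hw => ?_⟩
  have : c * f w - (Polynomial.C c * p).eval w = c * (f w - p.eval w) := by
    simp only [Polynomial.eval_mul, Polynomial.eval_C]; ring
  rw [this, norm_mul]
  calc ‖c‖ * ‖f w - p.eval w‖ ≤ ‖c‖ * (ε/‖c‖) :=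
      mul_le_mul_of_nonneg_left (hp w hw) (norm_nonneg _)
    _ = ε := by
        rw [mul_comm]
        exact div_mul_cancel₀ ε (norm_ne_zero_iff.mpr hc)

lemma Approx.pow {M : Set ℂ} {f : ℂ → ℂ} {B : ℝ} (hf : Approx M f)
    (hB : ∀ w ∈ M, ‖f w‖ ≤ B) (n : ℕ) :
    Approx M (fun w => (f w) ^ (n+1)) := by
  induction n with
  | zero => exact hf.of_eq (fun w _ => by ring)
  | succ n ih =>
      have := (Approx.mul hf ih hB (fun w hw => by
        rw [norm_pow]; exact pow_le_pow_left₀ (norm_nonneg _) (hB w hw) (n+1)))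
      exact this.of_eq (fun w _ => by ring)

lemma Approx.sum_range {M : Set ℂ} (F : ℕ → ℂ → ℂ) (N : ℕ)
    (h : ∀ k < N, Approx M (F k)) :
    Approx M (fun w => ∑ k ∈ Finset.range N, F k w) := by
  induction N with
  | zero => exact (approx_poly M 0).of_eq (by simp)
  | succ N ih =>
      have h1 : Approx M (fun w => ∑ k ∈ Finset.range N, F k w) :=
        ih (fun k hk => h k (Nat.lt_succ_of_lt hk))
      have h2 := h1.add (h N (Nat.lt_succ_self N))
      exact h2.of_eq (fun w _ => by rw [Finset.sum_range_succ])

lemma approx_inv_push {M : Set ℂ} {b a : ℂ} {d : ℝ} (hd : 0 < d)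
    (hdb : ∀ w ∈ M, d ≤ ‖w - b‖)
    (hab : ∀ w ∈ M, ‖a - b‖ ≤ ‖w - b‖ / 2)
    (hb : Approx M (fun w => (w - b)⁻¹)) :
    Approx M (fun w => (w - a)⁻¹) := by
  have hwb : ∀ w ∈ M, w - b ≠ 0 := fun w hw h => by
    have := hdb w hw; rw [h, norm_zero] at this; linarith
  have hwa2 : ∀ w ∈ M, ‖w - b‖ / 2 ≤ ‖w - a‖ := by
    intro w hw
    have h0 : (w - b) - (a - b) = w - a := by ring
    have h1 : ‖w - b‖ - ‖a - b‖ ≤ ‖w - a‖ := by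
      calc ‖w - b‖ - ‖a - b‖ ≤ ‖(w - b) - (a - b)‖ := norm_sub_norm_le _ _
        _ = ‖w - a‖ := by rw [h0]
    linarith [hab w hw]
  have hwa : ∀ w ∈ M, w - a ≠ 0 := fun w hw h => by
    have h1 := hwa2 w hw; rw [h, norm_zero] at h1
    have h2 := hdb w hw; linarith
  -- the error identity
  have key : ∀ N : ℕ, ∀ w ∈ M,
      (w - a)⁻¹ - (∑ k ∈ Finset.range N, (a-b)^k * ((w-b)⁻¹)^(k+1))
        = ((a-b) * (w-b)⁻¹)^N * (w - a)⁻¹ := by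
    intro N w hw
    induction N with
    | zero => simp
    | succ N ih =>
        have base : (w-a)⁻¹ - (w-b)⁻¹ = (a-b) * ((w-b)⁻¹ * (w-a)⁻¹) := by
          rw [inv_sub_inv (hwa w hw) (hwb w hw), show w - b - (w-a) = a - b by ring,
            div_eq_mul_inv, mul_inv]
          ring
        rw [Finset.sum_range_succ, ← sub_sub, ih]
        calc ((a-b) * (w-b)⁻¹)^N * (w-a)⁻¹ - (a-b)^N * ((w-b)⁻¹)^(N+1)
            = (a-b)^N * ((w-b)⁻¹)^N * ((w-a)⁻¹ - (w-b)⁻¹) := by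
              rw [mul_pow, pow_succ]; ring
          _ = (a-b)^N * ((w-b)⁻¹)^N * ((a-b) * ((w-b)⁻¹ * (w-a)⁻¹)) := by rw [base]
          _ = ((a-b) * (w-b)⁻¹)^(N+1) * (w-a)⁻¹ := by rw [mul_pow, pow_succ]; ring
  -- error bound
  have errb : ∀ N : ℕ, ∀ w ∈ M,
      ‖((a-b) * (w-b)⁻¹)^N * (w - a)⁻¹‖ ≤ (1/2)^N * (2/d) := by
    intro N w hw
    have hb1 : (0:ℝ) < ‖w - b‖ := lt_of_lt_of_le hd (hdb w hw)
    have ha1 : (0:ℝ) < ‖w - a‖ := lt_of_lt_of_le (by linarith) (hwa2 w hw)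
    rw [norm_mul, norm_pow, norm_mul, norm_inv, norm_inv]
    have h2 : ‖a - b‖ * ‖w - b‖⁻¹ ≤ 1/2 := by
      rw [← le_div_iff₀ (by positivity)] at *
      calc ‖a - b‖ ≤ ‖w - b‖ / 2 := hab w hw
        _ = 1/2 / ‖w-b‖⁻¹ := by field_simp
    have h3 : ‖w - a‖⁻¹ ≤ 2/d := by
      rw [inv_le_comm₀ ha1 (by positivity)]
      calc (2/d)⁻¹ = d/2 := by rw [inv_div]
        _ ≤ ‖w - b‖ / 2 := by linarith [hdb w hw]
        _ ≤ ‖w - a‖ := hwa2 w hw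
    exact mul_le_mul (pow_le_pow_left₀ (by positivity) h2 N) h3 (by positivity)
      (by positivity)
  intro ε hε
  obtain ⟨N, hN⟩ := exists_pow_lt_of_lt_one (show (0:ℝ) < ε/2 * (d/2) by positivity)
    (show (1:ℝ)/2 < 1 by norm_num)
  have happrox : Approx M (fun w => ∑ k ∈ Finset.range N, (a-b)^k * ((w-b)⁻¹)^(k+1)) := by
    refine Approx.sum_range _ N (fun k hk => ?_)
    have hpow : Approx M (fun w => ((w-b)⁻¹)^(k+1)) :=
      Approx.pow hb (B := 1/d) (fun w hw => by
        rw [norm_inv]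
        rw [inv_le_comm₀ (lt_of_lt_of_le hd (hdb w hw)) (by positivity)]
        simpa using hdb w hw) k
    exact (hpow.const_mul ((a-b)^k)).of_eq (fun w _ => rfl)
  obtain ⟨p, hp⟩ := happrox (ε/2) (by positivity)
  refine ⟨p, fun w hw => ?_⟩
  have hsplit : (w - a)⁻¹ - p.eval w
      = ((w - a)⁻¹ - (∑ k ∈ Finset.range N, (a-b)^k * ((w-b)⁻¹)^(k+1)))
        + ((∑ k ∈ Finset.range N, (a-b)^k * ((w-b)⁻¹)^(k+1)) - p.eval w) := by ring
  rw [hsplit]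
  have e1 : ‖(w - a)⁻¹ - (∑ k ∈ Finset.range N, (a-b)^k * ((w-b)⁻¹)^(k+1))‖ ≤ ε/2 := by
    rw [key N w hw]
    refine le_trans (errb N w hw) ?_
    have : (1/2:ℝ)^N * (2/d) < (ε/2 * (d/2)) * (2/d) :=
      mul_lt_mul_of_pos_right hN (by positivity)
    have h4 : (ε/2 * (d/2)) * (2/d) = ε/2 * (d * 2 / (2 * d)) := by ring
    have h5 : d * 2 / (2*d) = 1 := by field_simp
    rw [h4, h5, mul_one] at this
    linarith
  calc ‖_ + _‖ ≤ _ + _ := norm_add_le _ _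
    _ ≤ ε/2 + ε/2 := add_le_add e1 (hp w hw)
    _ = ε := by ring

lemma approx_inv_far {M : Set ℂ} {ρ : ℝ} (hρ0 : 0 ≤ ρ) (hρ : ∀ w ∈ M, ‖w‖ ≤ ρ) {b : ℂ}
    (hbig : 2*ρ + 2 ≤ ‖b‖) : Approx M (fun w => (w - b)⁻¹) := by
  have hb0 : b ≠ 0 := by intro h; rw [h, norm_zero] at hbig; linarith
  have hwb : ∀ w ∈ M, (ρ:ℝ) + 2 ≤ ‖w - b‖ := by
    intro w hw
    have h1 : ‖b‖ - ‖w‖ ≤ ‖w - b‖ := by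
      calc ‖b‖ - ‖w‖ ≤ ‖b - w‖ := norm_sub_norm_le _ _
        _ = ‖w - b‖ := norm_sub_rev _ _
    linarith [hρ w hw]
  have hwbne : ∀ w ∈ M, w - b ≠ 0 := fun w hw h => by
    have := hwb w hw; rw [h, norm_zero] at this; linarith
  have key : ∀ N : ℕ, ∀ w ∈ M,
      (w - b)⁻¹ + (∑ k ∈ Finset.range N, (b⁻¹)^(k+1) * w^k)
        = (w * b⁻¹)^N * (w - b)⁻¹ := by
    intro N w hw
    induction N with
    | zero => simp
    | succ N ih =>
        rw [Finset.sum_range_succ, ← add_assoc, ih]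
        have hx1 : (w * b⁻¹) - 1 = (w - b) * b⁻¹ := by
          field_simp
        have hstep : (w*b⁻¹)^N * (w*b⁻¹) * (w-b)⁻¹ - (w*b⁻¹)^N * (w-b)⁻¹
            = (b⁻¹)^(N+1) * w^N := by
          calc (w*b⁻¹)^N * (w*b⁻¹) * (w-b)⁻¹ - (w*b⁻¹)^N * (w-b)⁻¹
              = (w*b⁻¹)^N * (w-b)⁻¹ * ((w*b⁻¹) - 1) := by ring
            _ = (w*b⁻¹)^N * (w-b)⁻¹ * ((w - b) * b⁻¹) := by rw [hx1]
            _ = (w*b⁻¹)^N * ((w-b)⁻¹ * (w-b)) * b⁻¹ := by ring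
            _ = (w*b⁻¹)^N * 1 * b⁻¹ := by rw [inv_mul_cancel₀ (hwbne w hw)]
            _ = (b⁻¹)^(N+1) * w^N := by rw [mul_pow, pow_succ]; ring
        rw [pow_succ]
        linear_combination -hstep
  intro ε hε
  obtain ⟨N, hN⟩ := exists_pow_lt_of_lt_one hε (show (1:ℝ)/2 < 1 by norm_num)
  refine ⟨∑ k ∈ Finset.range N, Polynomial.C (-((b⁻¹)^(k+1))) * Polynomial.X^k,
    fun w hw => ?_⟩
  have heval : Polynomial.eval w (∑ k ∈ Finset.range N,
      Polynomial.C (-((b⁻¹)^(k+1))) * Polynomial.X^k)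
      = -(∑ k ∈ Finset.range N, (b⁻¹)^(k+1) * w^k) := by
    rw [Polynomial.eval_finset_sum, ← Finset.sum_neg_distrib]
    exact Finset.sum_congr rfl (fun k _ => by simp)
  rw [heval, sub_neg_eq_add, key N w hw]
  have hb1 : (0:ℝ) < ‖w - b‖ := lt_of_lt_of_le (by linarith) (hwb w hw)
  rw [norm_mul, norm_pow, norm_mul, norm_inv, norm_inv]
  have hx : ‖w‖ * ‖b‖⁻¹ ≤ 1/2 := by
    have hb2 : (0:ℝ) < ‖b‖ := by linarith
    have h3 : ‖w‖ ≤ ‖b‖ / 2 := by linarith [hρ w hw]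
    calc ‖w‖ * ‖b‖⁻¹ ≤ (‖b‖/2) * ‖b‖⁻¹ :=
        mul_le_mul_of_nonneg_right h3 (by positivity)
      _ = 1/2 := by rw [div_mul_eq_mul_div, mul_inv_cancel₀ (ne_of_gt hb2)]
  have hinv : ‖w - b‖⁻¹ ≤ 1 := by
    rw [inv_le_one_iff₀]
    right; linarith [hwb w hw]
  calc (‖w‖ * ‖b‖⁻¹)^N * ‖w - b‖⁻¹ ≤ (1/2)^N * 1 :=
      mul_le_mul (pow_le_pow_left₀ (by positivity) hx N) hinv (by positivity) (by positivity)
    _ ≤ ε := by rw [mul_one]; exact hN.le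

lemma approx_inv_all {M : Set ℂ} (hM : IsCompact M) (hMc : IsPreconnected Mᶜ) :
    ∀ a ∉ M, Approx M (fun w => (w - a)⁻¹) := by
  rcases M.eq_empty_or_nonempty with rfl | hne
  · exact fun a _ ε hε => ⟨0, by simp⟩
  obtain ⟨ρ₀, hρ₀⟩ := hM.isBounded.exists_norm_le
  set ρ := max ρ₀ 0 with hρdef
  have hρ0 : (0:ℝ) ≤ ρ := le_max_right _ _
  have hρ : ∀ w ∈ M, ‖w‖ ≤ ρ := fun w hw => le_trans (hρ₀ w hw) (le_max_left _ _)
  set A := {a : ℂ | a ∉ M ∧ Approx M fun w => (w-a)⁻¹} with hAdef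
  have hdist : ∀ a ∉ M, 0 < infDist a M ∧ ∀ w ∈ M, infDist a M ≤ ‖w - a‖ := by
    intro a ha
    refine ⟨(hM.isClosed.notMem_iff_infDist_pos hne).1 ha, fun w hw => ?_⟩
    rw [← norm_sub_rev, ← dist_eq_norm]
    exact infDist_le_dist_of_mem hw
  have hopen : ∀ a ∈ A, ball a (infDist a M / 4) ⊆ A := by
    rintro a ⟨haM, haA⟩ a' ha'
    obtain ⟨hda, hdw⟩ := hdist a haM
    rw [mem_ball, dist_comm, dist_eq_norm] at ha'
    have ha'M : a' ∉ M := by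
      intro hmem
      have := hdw a' hmem
      have h2 : ‖a' - a‖ = ‖a - a'‖ := norm_sub_rev _ _
      rw [h2] at this
      linarith
    refine ⟨ha'M, approx_inv_push (b := a) (d := infDist a M) hda hdw
      (fun w hw => ?_) haA⟩
    calc ‖a' - a‖ = ‖a - a'‖ := norm_sub_rev _ _
      _ ≤ infDist a M / 4 := ha'.le
      _ ≤ ‖w - a‖ / 2 := by linarith [hdw w hw]
  have hAopen : IsOpen A := by
    rw [Metric.isOpen_iff]
    intro a ha
    refine ⟨infDist a M / 4, ?_, hopen a ha⟩
    have := (hdist a ha.1).1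
    linarith
  have hclosed : ∀ a ∉ M, a ∈ closure A → a ∈ A := by
    intro a haM hacl
    obtain ⟨hda, hdw⟩ := hdist a haM
    obtain ⟨b', hb'A, hb'd⟩ := Metric.mem_closure_iff.1 hacl (infDist a M / 4) (by positivity)
    rw [dist_eq_norm] at hb'd
    have hwb' : ∀ w ∈ M, 3 * infDist a M / 4 ≤ ‖w - b'‖ := by
      intro w hw
      have h1 : ‖w - a‖ - ‖b' - a‖ ≤ ‖w - b'‖ := by
        calc ‖w - a‖ - ‖b' - a‖ ≤ ‖(w - a) - (b' - a)‖ := norm_sub_norm_le _ _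
          _ = ‖w - b'‖ := by ring_nf
      have h2 : ‖b' - a‖ = ‖a - b'‖ := norm_sub_rev _ _
      rw [h2] at h1
      linarith [hdw w hw]
    refine ⟨haM, approx_inv_push (b := b') (d := 3 * infDist a M / 4) (by positivity)
      hwb' (fun w hw => ?_) hb'A.2⟩
    calc ‖a - b'‖ ≤ infDist a M / 4 := hb'd.le
      _ ≤ (3 * infDist a M / 4) / 2 := by linarith
      _ ≤ ‖w - b'‖ / 2 := by linarith [hwb' w hw]
  -- far point in A
  have hfar : (((2*ρ+2 : ℝ) : ℂ)) ∈ A ∧ (((2*ρ+2 : ℝ) : ℂ)) ∉ M := by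
    have hnorm : ‖(((2*ρ+2 : ℝ) : ℂ))‖ = 2*ρ+2 := by
      rw [Complex.norm_real]; exact abs_of_pos (by linarith)
    have hM' : (((2*ρ+2 : ℝ) : ℂ)) ∉ M := by
      intro h
      have := hρ _ h
      rw [hnorm] at this
      linarith
    exact ⟨⟨hM', approx_inv_far hρ0 hρ (by rw [hnorm])⟩, hM'⟩
  -- A covers Mᶜ
  intro a haM
  have hVempty : ¬ (Mᶜ ∩ (closure A)ᶜ).Nonempty := by
    intro hV
    have hcov : Mᶜ ⊆ A ∪ (closure A)ᶜ := by
      intro x hx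
      by_cases hxc : x ∈ closure A
      · exact Or.inl (hclosed x hx hxc)
      · exact Or.inr hxc
    obtain ⟨x, -, hx2⟩ := hMc A (closure A)ᶜ hAopen (isClosed_closure.isOpen_compl)
      hcov ⟨_, hfar.2, hfar.1⟩ hV
    exact hx2.2 (subset_closure hx2.1)
  have : a ∈ closure A := by
    by_contra h
    exact hVempty ⟨a, haM, h⟩
  exact (hclosed a haM this).2

lemma exists_sep_poly {M : Set ℂ} (hM : IsCompact M) (hMc : IsPreconnected Mᶜ) {z : ℂ}
    (hz : z ∉ M) : ∃ p : Polynomial ℂ, ∀ w ∈ M, ‖p.eval w‖ < ‖p.eval z‖ := by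
  rcases M.eq_empty_or_nonempty with rfl | hne
  · exact ⟨0, by simp⟩
  obtain ⟨ρ₀, hρ₀⟩ := hM.isBounded.exists_norm_le
  set ρ := max ρ₀ 0 with hρdef
  have hρ : ∀ w ∈ M, ‖w‖ ≤ ρ := fun w hw => le_trans (hρ₀ w hw) (le_max_left _ _)
  have hρ0 : (0:ℝ) ≤ ρ := le_max_right _ _
  set ε := 1/(2*(ρ + ‖z‖ + 1)) with hεdef
  obtain ⟨p, hp⟩ := approx_inv_all hM hMc z hz ε (by positivity)
  refine ⟨Polynomial.C 1 - (Polynomial.X - Polynomial.C z) * p, fun w hw => ?_⟩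
  have hevz : Polynomial.eval z (Polynomial.C 1 - (Polynomial.X - Polynomial.C z) * p) = 1 := by
    simp
  have hwz : w - z ≠ 0 := fun h => hz (by rwa [sub_eq_zero.1 h] at hw)
  have hevw : Polynomial.eval w (Polynomial.C 1 - (Polynomial.X - Polynomial.C z) * p)
      = (w - z) * ((w - z)⁻¹ - p.eval w) := by
    simp only [Polynomial.eval_sub, Polynomial.eval_mul, Polynomial.eval_C, Polynomial.eval_X]
    field_simp
  rw [hevz, hevw, norm_one, norm_mul]
  have hb1 : ‖w - z‖ ≤ ρ + ‖z‖ := by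
    calc ‖w - z‖ ≤ ‖w‖ + ‖z‖ := norm_sub_le _ _
      _ ≤ ρ + ‖z‖ := by linarith [hρ w hw]
  have hb2 : ‖w - z‖ * ‖(w - z)⁻¹ - p.eval w‖ ≤ (ρ + ‖z‖) * ε :=
    mul_le_mul hb1 (hp w hw) (norm_nonneg _) (by positivity)
  have hb3 : (ρ + ‖z‖) * ε < 1 := by
    have he : (ρ + ‖z‖) * ε = (ρ + ‖z‖)/(2*(ρ + ‖z‖ + 1)) := by rw [hεdef]; ring
    rw [he, div_lt_one (by positivity)]
    linarith [norm_nonneg z]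
  linarith

lemma telescope_log {M : Set ℂ} (N : ℕ) (f : ℕ → ℂ → ℂ)
    (hc : ∀ k ≤ N, ContinuousOn (f k) M)
    (hne : ∀ k ≤ N, ∀ w ∈ M, f k w ≠ 0)
    (hrat : ∀ k < N, ∀ w ∈ M, ‖f (k+1) w / f k w - 1‖ < 1) :
    ∃ g : ℂ → ℂ, ContinuousOn g M ∧ ∀ w ∈ M, Complex.exp (g w) = f N w / f 0 w := by
  refine ⟨fun w => ∑ k ∈ Finset.range N, Complex.log (f (k+1) w / f k w), ?_, ?_⟩
  · refine continuousOn_finset_sum _ (fun k hk => ?_)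
    rw [Finset.mem_range] at hk
    refine ContinuousOn.clog ?_ ?_
    · exact ((hc (k+1) hk).div (hc k hk.le) (fun w hw => hne k hk.le w hw))
    · intro w hw
      have h1 := hrat k hk w hw
      rw [Complex.mem_slitPlane_iff]
      left
      have h2 : |(f (k+1) w / f k w - 1).re| ≤ ‖f (k+1) w / f k w - 1‖ :=
        Complex.abs_re_le_norm _
      have h3 : (f (k+1) w / f k w - 1).re = (f (k+1) w / f k w).re - 1 := by simp
      cases abs_le.1 h2 with
      | intro hl hr => rw [h3] at hl; linarith
  · intro w hw
    rw [Complex.exp_sum]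
    have hprod : ∀ n ≤ N, (∏ k ∈ Finset.range n, Complex.exp
        (Complex.log (f (k+1) w / f k w))) = f n w / f 0 w := by
      intro n hn
      induction n with
      | zero => simp [div_self (hne 0 (Nat.zero_le N) w hw)]
      | succ n ih =>
          rw [Finset.prod_range_succ, ih (le_trans (Nat.le_succ n) hn)]
          have hq : f (n+1) w / f n w ≠ 0 := by
            intro h
            have := hrat n (Nat.lt_of_succ_le hn) w hw
            rw [h] at this
            simp at this
          rw [Complex.exp_log hq]
          field_simp [hne n (le_trans (Nat.le_succ n) hn) w hw,
            hne 0 (Nat.zero_le N) w hw]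
    exact hprod N le_rfl

lemma exists_log_ratio {M : Set ℂ} (hM : IsCompact M) {z b : ℂ} (γ : Path z b)
    (hγ : ∀ t : unitInterval, γ t ∉ M) :
    ∃ g : ℂ → ℂ, ContinuousOn g M ∧
      ∀ w ∈ M, Complex.exp (g w) = (w - z)/(w - b) := by
  rcases M.eq_empty_or_nonempty with rfl | hMne
  · exact ⟨0, continuousOn_empty _, fun w hw => absurd hw (Set.notMem_empty w)⟩
  set φ : ℝ → ℂ := ⇑γ.extend with hφ
  have hφc : Continuous φ := γ.continuous_extend
  have hφM : ∀ t ∈ Set.Icc (0:ℝ) 1, φ t ∉ M := by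
    intro t ht
    rw [hφ, Path.extend_apply γ ht]
    exact hγ _
  -- positive distance between the path and M
  have hT : IsCompact (φ '' Set.Icc 0 1) := (isCompact_Icc).image hφc
  have hTd : Disjoint (φ '' Set.Icc 0 1) M := by
    rw [Set.disjoint_left]
    rintro x ⟨t, ht, rfl⟩
    exact hφM t ht
  obtain ⟨δ, hδ, hdisj⟩ := hTd.exists_thickenings hT hM.isClosed
  have hdist : ∀ t ∈ Set.Icc (0:ℝ) 1, ∀ w ∈ M, δ ≤ ‖w - φ t‖ := by
    intro t ht w hw
    by_contra h
    push_neg at h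
    have h1 : w ∈ Metric.thickening δ (φ '' Set.Icc 0 1) := by
      rw [Metric.mem_thickening_iff]
      exact ⟨φ t, ⟨t, ht, rfl⟩, by rwa [dist_eq_norm]⟩
    have h2 : w ∈ Metric.thickening δ M := Metric.self_subset_thickening hδ M hw
    exact Set.disjoint_left.1 hdisj h1 h2
  -- uniform continuity of φ on Icc 0 1
  have hunif : UniformContinuousOn φ (Set.Icc 0 1) :=
    isCompact_Icc.uniformContinuousOn_of_continuous hφc.continuousOn
  rw [Metric.uniformContinuousOn_iff] at hunif
  obtain ⟨δ', hδ', hδ'c⟩ := hunif (δ/2) (by positivity)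
  obtain ⟨N₀, hN₀⟩ := exists_nat_one_div_lt hδ'
  set N := N₀ + 1 with hN
  have hNpos : (0:ℝ) < N := by positivity
  have hstep : ∀ k : ℕ, k ≤ N → ((k:ℝ)/N) ∈ Set.Icc (0:ℝ) 1 := by
    intro k hk
    constructor
    · positivity
    · rw [div_le_one hNpos]
      exact_mod_cast hk
  have hclose : ∀ k : ℕ, k < N → ‖φ ((k+1:ℕ)/N) - φ ((k:ℕ)/N)‖ < δ/2 := by
    intro k hk
    have h1 := hδ'c _ (hstep (k+1) hk) _ (hstep k hk.le)
    rw [dist_eq_norm, dist_eq_norm] at h1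
    refine h1 ?_
    have h2 : ((k+1:ℕ):ℝ)/N - ((k:ℕ):ℝ)/N = 1/N := by
      rw [div_sub_div_same]
      norm_num
    rw [h2, show ‖(1:ℝ)/N‖ = 1/N from abs_of_pos (by positivity)]
    calc (1:ℝ)/N = 1/(N₀+1) := by rw [hN]; push_cast; ring
      _ < δ' := hN₀
  obtain ⟨g₀, hg₀c, hg₀⟩ := telescope_log (M := M) N (fun k w => w - φ ((k:ℕ)/N))
    (fun k _ => (continuous_id.sub continuous_const).continuousOn)
    (fun k hk w hw => by
      intro h
      have := hdist _ (hstep k hk) w hw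
      rw [h, norm_zero] at this
      linarith)
    (fun k hk w hw => by
      have hd0 : w - φ ((k:ℕ)/N) ≠ 0 := by
        intro h
        have := hdist _ (hstep k hk.le) w hw
        rw [h, norm_zero] at this
        linarith
      have hdpos : (0:ℝ) < ‖w - φ ((k:ℕ)/N)‖ :=
        lt_of_lt_of_le hδ (hdist _ (hstep k hk.le) w hw)
      rw [div_sub_one hd0]
      have hnum : (w - φ ((k+1:ℕ)/N)) - (w - φ ((k:ℕ)/N))
          = -(φ ((k+1:ℕ)/N) - φ ((k:ℕ)/N)) := by ring
      rw [hnum, norm_div, norm_neg, div_lt_one hdpos]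
      calc ‖φ ((k+1:ℕ)/N) - φ ((k:ℕ)/N)‖ < δ/2 := hclose k hk
        _ < ‖w - φ ((k:ℕ)/N)‖ := by linarith [hdist _ (hstep k hk.le) w hw])
  have hφN : φ ((N:ℕ)/N : ℝ) = b := by
    rw [show ((N:ℕ):ℝ)/N = 1 from div_self (ne_of_gt hNpos), hφ, Path.extend_one]
  have hφ0 : φ ((0:ℕ)/N : ℝ) = z := by
    rw [show ((0:ℕ):ℝ)/N = 0 by norm_num, hφ, Path.extend_zero]
  refine ⟨fun w => -(g₀ w), hg₀c.neg, fun w hw => ?_⟩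
  have hwz : w - z ≠ 0 := by
    have := hdist 0 (by constructor <;> norm_num) w hw
    rw [hφ, Path.extend_zero] at this
    intro h
    rw [h, norm_zero] at this
    linarith
  have hwb : w - b ≠ 0 := by
    have := hdist 1 (by constructor <;> norm_num) w hw
    rw [hφ, Path.extend_one] at this
    intro h
    rw [h, norm_zero] at this
    linarith
  rw [Complex.exp_neg, hg₀ w hw, hφN, hφ0, inv_div]

lemma exists_log_on_closedBall {c : ℂ} {R : ℝ} (hR : 0 < R) {F : ℂ → ℂ}
    (hF : Continuous F) (hFne : ∀ w, F w ≠ 0) :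
    ∃ G : ℂ → ℂ, ContinuousOn G (Metric.closedBall c R) ∧
      ∀ w ∈ Metric.closedBall c R, Complex.exp (G w) = F w := by
  set B := Metric.closedBall c R with hB
  have hBc : IsCompact B := isCompact_closedBall c R
  have hBne : B.Nonempty := ⟨c, Metric.mem_closedBall_self hR.le⟩
  -- minimum of ‖F‖ on B
  obtain ⟨w₀, hw₀B, hw₀'⟩ := hBc.exists_isMinOn hBne (hF.norm.continuousOn)
  set m := ‖F w₀‖ with hm
  have hw₀ : ∀ x ∈ B, m ≤ ‖F x‖ := fun x hx => hw₀' hx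
  have hm0 : 0 < m := norm_pos_iff.mpr (hFne w₀)
  -- uniform continuity of F on B
  have hunif : UniformContinuousOn F B :=
    hBc.uniformContinuousOn_of_continuous hF.continuousOn
  rw [Metric.uniformContinuousOn_iff] at hunif
  obtain ⟨δ', hδ', hδ'c⟩ := hunif (m/2) (by positivity)
  obtain ⟨N₀, hN₀⟩ := exists_nat_gt (R/δ')
  set N := N₀ + 1 with hN
  have hNpos : (0:ℝ) < N := by positivity
  have hRN : R / N < δ' := by
    rw [div_lt_iff₀ hNpos]
    rw [div_lt_iff₀ hδ'] at hN₀
    have : (N₀:ℝ) < N := by rw [hN]; push_cast; linarith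
    calc R < δ' * N₀ + δ' := by nlinarith
      _ ≤ δ' * N := by push_cast [hN]; ring_nf; nlinarith
  -- the points
  set P : ℕ → ℂ → ℂ := fun k w => c + ((k:ℂ)/(N:ℂ)) * (w - c) with hP
  have hPmem : ∀ k : ℕ, k ≤ N → ∀ w ∈ B, P k w ∈ B := by
    intro k hk w hw
    rw [hB, Metric.mem_closedBall, dist_eq_norm] at *
    have h1 : P k w - c = ((k:ℂ)/(N:ℂ)) * (w - c) := by rw [hP]; ring
    rw [h1, norm_mul]
    have h2 : ‖((k:ℂ)/(N:ℂ))‖ ≤ 1 := by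
      rw [norm_div]
      rw [Complex.norm_natCast, Complex.norm_natCast]
      rw [div_le_one (by exact_mod_cast hNpos)]
      exact_mod_cast hk
    calc ‖((k:ℂ)/(N:ℂ))‖ * ‖w - c‖ ≤ 1 * ‖w - c‖ :=
        mul_le_mul_of_nonneg_right h2 (norm_nonneg _)
      _ = ‖w - c‖ := one_mul _
      _ ≤ R := hw
  have hPclose : ∀ k : ℕ, k < N → ∀ w ∈ B, ‖F (P (k+1) w) - F (P k w)‖ < m/2 := by
    intro k hk w hw
    have h1 := hδ'c _ (hPmem (k+1) hk w hw) _ (hPmem k hk.le w hw)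
    rw [dist_eq_norm, dist_eq_norm] at h1
    refine h1 ?_
    have h2 : P (k+1) w - P k w = (1/(N:ℂ)) * (w - c) := by
      rw [hP]
      push_cast
      ring
    rw [h2, norm_mul, norm_div, norm_one, Complex.norm_natCast]
    have h3 : ‖w - c‖ ≤ R := by
      rw [hB, Metric.mem_closedBall, dist_eq_norm] at hw
      exact hw
    calc 1/(N:ℝ) * ‖w - c‖ ≤ 1/(N:ℝ) * R := by
          refine mul_le_mul_of_nonneg_left h3 (by positivity)
      _ = R / N := by ring
      _ < δ' := hRN
  have hPm : ∀ k : ℕ, k ≤ N → ∀ w ∈ B, m ≤ ‖F (P k w)‖ :=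
    fun k hk w hw => hw₀ _ (hPmem k hk w hw)
  obtain ⟨g₀, hg₀c, hg₀⟩ := telescope_log (M := B) N (fun k w => F (P k w))
    (fun k hk => (hF.comp (by continuity)).continuousOn)
    (fun k hk w hw => by
      intro h
      have := hPm k hk w hw
      rw [h, norm_zero] at this
      linarith)
    (fun k hk w hw => by
      have hd0 : F (P k w) ≠ 0 := hFne _
      have hdpos : (0:ℝ) < ‖F (P k w)‖ := norm_pos_iff.mpr hd0
      rw [div_sub_one hd0, norm_div, div_lt_one hdpos]
      calc ‖F (P (k+1) w) - F (P k w)‖ < m/2 := hPclose k hk w hw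
        _ < ‖F (P k w)‖ := by linarith [hPm k hk.le w hw])
  have hP0 : ∀ w, P 0 w = c := by intro w; rw [hP]; simp
  have hPN : ∀ w, P N w = w := by
    intro w
    rw [hP]
    simp only
    rw [div_self (by exact_mod_cast (ne_of_gt hNpos) : (N:ℂ) ≠ 0)]
    ring
  refine ⟨fun w => g₀ w + Complex.log (F c), hg₀c.add continuousOn_const, fun w hw => ?_⟩
  rw [Complex.exp_add, hg₀ w hw, hPN, hP0, Complex.exp_log (hFne c)]
  field_simp [hFne c]

lemma no_log_on_sphere {z : ℂ} {R : ℝ} (hR : 0 < R) {G : ℂ → ℂ}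
    (hG : ContinuousOn G (Metric.sphere z R))
    (h : ∀ w ∈ Metric.sphere z R, Complex.exp (G w) = w - z) : False := by
  set p : ℝ → ℂ := fun t => z + (R:ℂ) * Complex.exp (((2 * Real.pi * t : ℝ) : ℂ) * Complex.I)
    with hp
  have hpmem : ∀ t : ℝ, p t ∈ Metric.sphere z R := by
    intro t
    rw [mem_sphere_iff_norm, hp]
    simp only [add_sub_cancel_left]
    rw [norm_mul, Complex.norm_real, Real.norm_eq_abs,
      Complex.norm_exp_ofReal_mul_I, abs_of_pos hR]
    ring
  have hpc : Continuous p := by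
    rw [hp]
    refine continuous_const.add (continuous_const.mul ?_)
    exact Complex.continuous_exp.comp ((Complex.continuous_ofReal.comp (by continuity)).mul
      continuous_const)
  set ψ : ℝ → ℂ := fun t => G (p t) - ((2 * Real.pi * t : ℝ) : ℂ) * Complex.I with hψ
  have hψc : Continuous ψ := by
    refine ((hG.comp_continuous hpc hpmem).sub ?_)
    exact (Complex.continuous_ofReal.comp (by continuity)).mul continuous_const
  have hψval : ∀ t : ℝ, Complex.exp (ψ t) = (R:ℂ) := by
    intro t
    rw [hψ]
    simp only
    rw [Complex.exp_sub, h _ (hpmem t)]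
    rw [hp]
    simp only [add_sub_cancel_left]
    rw [mul_div_assoc, div_self (Complex.exp_ne_zero _), mul_one]
  have hRne : (R:ℂ) ≠ 0 := by exact_mod_cast ne_of_gt hR
  -- the set where ψ equals ψ 0 is clopen
  set S : Set ℝ := {t | ψ t = ψ 0} with hS
  have hSclosed : IsClosed S := isClosed_eq hψc continuous_const
  have hSopen : IsOpen S := by
    rw [isOpen_iff_mem_nhds]
    intro t₀ ht₀
    have hcont : Continuous fun t => ψ t - ψ t₀ := hψc.sub continuous_const
    have hU : IsOpen {t | ‖ψ t - ψ t₀‖ < 1} := by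
      have : {t | ‖ψ t - ψ t₀‖ < 1} = (fun t => ψ t - ψ t₀) ⁻¹' (Metric.ball 0 1) := by
        ext t
        simp [Metric.mem_ball, dist_eq_norm]
      rw [this]
      exact Metric.isOpen_ball.preimage hcont
    refine Filter.mem_of_superset (hU.mem_nhds (by simp)) ?_
    intro t ht
    simp only [Set.mem_setOf_eq] at ht ⊢
    have hexp : Complex.exp (ψ t - ψ t₀) = 1 := by
      rw [Complex.exp_sub, hψval, hψval, div_self hRne]
    obtain ⟨n, hn⟩ := Complex.exp_eq_one_iff.1 hexp
    have hn0 : n = 0 := by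
      by_contra hn0
      have h1 : (1:ℝ) ≤ |(n:ℝ)| := by
        rw [← Int.cast_abs]
        exact_mod_cast Int.one_le_abs hn0
      have h2 : ‖ψ t - ψ t₀‖ = |(n:ℝ)| * (2 * Real.pi) := by
        rw [hn, norm_mul]
        have : ‖(2 * (Real.pi:ℂ) * Complex.I)‖ = 2 * Real.pi := by
          rw [norm_mul, norm_mul, Complex.norm_I, mul_one]
          simp [Real.pi_nonneg]
        rw [this]
        simp
      rw [h2] at ht
      nlinarith [Real.pi_gt_three]
    rw [hn0] at hn
    simp only [Int.cast_zero, zero_mul] at hn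
    rw [sub_eq_zero] at hn
    show ψ t = ψ 0
    rw [hn]
    exact ht₀
  have hS0 : (0:ℝ) ∈ S := rfl
  have hSuniv : S = Set.univ := IsClopen.eq_univ ⟨hSclosed, hSopen⟩ ⟨0, hS0⟩
  have h1S : (1:ℝ) ∈ S := by rw [hSuniv]; trivial
  -- p 1 = p 0, whence 2πI = 0, contradiction
  have hp10 : p 1 = p 0 := by
    rw [hp]
    simp only
    have e1 : ((2*Real.pi*1:ℝ):ℂ) * Complex.I = 2*(Real.pi:ℂ)*Complex.I := by push_cast; ring
    have e0 : ((2*Real.pi*0:ℝ):ℂ) * Complex.I = 0 := by push_cast; ring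
    rw [e1, e0, Complex.exp_two_pi_mul_I, Complex.exp_zero]
  have hψ10 : ψ 1 = ψ 0 := h1S
  rw [hψ] at hψ10
  simp only at hψ10
  rw [hp10] at hψ10
  have h2 : ((2*Real.pi*1:ℝ):ℂ) * Complex.I = ((2*Real.pi*0:ℝ):ℂ) * Complex.I := by
    linear_combination -hψ10
  have h3 : 2*(Real.pi:ℂ)*Complex.I = 0 := by
    push_cast at h2
    linear_combination h2
  simp [Complex.I_ne_zero, Complex.ofReal_ne_zero, Real.pi_ne_zero] at h3

theorem polyConvex_main (m : ℕ) (K : Fin m → Set ℂ)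
    (hcpt : ∀ i, IsCompact (K i))
    (hdisj : Pairwise (Function.onFun Disjoint K))
    (hconn : ∀ i, IsConnected (K i)ᶜ) :
    IsConnected (⋃ i, K i)ᶜ := by
  classical
  set Kt := ⋃ i, K i with hKt
  have hKtc : IsCompact Kt := isCompact_iUnion hcpt
  have hKtcl : IsClosed Kt := hKtc.isClosed
  obtain ⟨r₀, hr₀⟩ := hKtc.isBounded.exists_norm_le
  set r := max r₀ 0 with hrdef
  have hr0 : (0:ℝ) ≤ r := le_max_right _ _
  have hKr : ∀ w ∈ Kt, ‖w‖ ≤ r := fun w hw => le_trans (hr₀ w hw) (le_max_left _ _)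
  set b : ℂ := ((r+1:ℝ):ℂ) with hbdef
  set Q : Set ℂ := {w : ℂ | |w.re| ≤ r ∧ |w.im| ≤ r} with hQdef
  have habs : ∀ w : ℂ, |w.re| ≤ ‖w‖ ∧ |w.im| ≤ ‖w‖ := fun w =>
    ⟨Complex.abs_re_le_norm w, Complex.abs_im_le_norm w⟩
  have hKQ : Kt ⊆ Q := fun w hw =>
    ⟨le_trans (habs w).1 (hKr w hw), le_trans (habs w).2 (hKr w hw)⟩
  have hbQ : b ∉ Q := by
    intro h
    have : |b.re| ≤ r := h.1
    rw [hbdef] at this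
    simp only [Complex.ofReal_re] at this
    rw [abs_of_pos (by linarith : (0:ℝ) < r + 1)] at this
    linarith
  have hbK : b ∉ Kt := fun h => hbQ (hKQ h)
  have hQclosed : IsClosed Q := by
    have : Q = {w : ℂ | |w.re| ≤ r} ∩ {w : ℂ | |w.im| ≤ r} := by
      ext w; simp [hQdef, Set.mem_setOf_eq, Set.mem_inter_iff]
    rw [this]
    exact IsClosed.inter
      (isClosed_le (continuous_abs.comp Complex.continuous_re) continuous_const)
      (isClosed_le (continuous_abs.comp Complex.continuous_im) continuous_const)
  -- the complement of Q is preconnected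
  set W : Set ℂ := (({w : ℂ | r < w.re} ∪ {w : ℂ | r < w.im}) ∪ {w : ℂ | w.re < -r})
      ∪ {w : ℂ | w.im < -r} with hWdef
  have hWQ : Qᶜ = W := by
    ext w
    simp only [hQdef, hWdef, Set.mem_compl_iff, Set.mem_setOf_eq, Set.mem_union,
      not_and_or, not_le, lt_abs, lt_neg]
    tauto
  have hWpre : IsPreconnected W := by
    have h1 : IsPreconnected {w : ℂ | r < w.re} := (convex_halfSpace_re_gt r).isPreconnected
    have h2 : IsPreconnected {w : ℂ | r < w.im} := (convex_halfSpace_im_gt r).isPreconnected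
    have h3 : IsPreconnected {w : ℂ | w.re < -r} := (convex_halfSpace_re_lt (-r)).isPreconnected
    have h4 : IsPreconnected {w : ℂ | w.im < -r} := (convex_halfSpace_im_lt (-r)).isPreconnected
    have p12 : IsPreconnected ({w : ℂ | r < w.re} ∪ {w : ℂ | r < w.im}) := by
      refine IsPreconnected.union (((r+1:ℝ):ℂ) + ((r+1:ℝ):ℂ)*Complex.I) ?_ ?_ h1 h2 <;>
        · simp only [Set.mem_setOf_eq, Complex.add_re, Complex.add_im, Complex.ofReal_re,
            Complex.ofReal_im, Complex.mul_I_re, Complex.mul_I_im]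
          norm_num
    have p123 : IsPreconnected (({w : ℂ | r < w.re} ∪ {w : ℂ | r < w.im})
        ∪ {w : ℂ | w.re < -r}) := by
      refine IsPreconnected.union ((-(r+1:ℝ):ℂ) + ((r+1:ℝ):ℂ)*Complex.I) ?_ ?_ p12 h3
      · refine Or.inr ?_
        simp only [Set.mem_setOf_eq, Complex.add_im, Complex.ofReal_im, Complex.mul_I_im,
          Complex.ofReal_re]
        norm_num
      · simp only [Set.mem_setOf_eq, Complex.add_re, Complex.ofReal_re, Complex.mul_I_re,
          Complex.ofReal_im]
        norm_num
    refine IsPreconnected.union (((r+1:ℝ):ℂ) + (-(r+1:ℝ):ℂ)*Complex.I) ?_ ?_ p123 h4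
    · refine Or.inl (Or.inl ?_)
      simp only [Set.mem_setOf_eq, Complex.add_re, Complex.ofReal_re, Complex.mul_I_re,
        Complex.ofReal_im]
      norm_num
    · simp only [Set.mem_setOf_eq, Complex.add_im, Complex.ofReal_im, Complex.mul_I_im,
        Complex.ofReal_re]
      norm_num
  have hQcpre : IsPreconnected Qᶜ := hWQ ▸ hWpre
  have hQcK : Qᶜ ⊆ Ktᶜ := Set.compl_subset_compl.mpr hKQ
  have hbQc : b ∈ Qᶜ := hbQ
  -- MAIN CLAIM
  have main : ∀ z ∈ Ktᶜ, z ∈ connectedComponentIn Ktᶜ b := by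
    intro z hz
    by_contra hzb
    set C := connectedComponentIn Ktᶜ z with hCdef
    have hzC : z ∈ C := mem_connectedComponentIn hz
    have hCopen : IsOpen C := (hKtcl.isOpen_compl).connectedComponentIn
    have hCsub : C ⊆ Ktᶜ := connectedComponentIn_subset _ _
    have hbC : b ∉ C := by
      intro h
      exact hzb (by rw [← connectedComponentIn_eq h]; exact hzC)
    have hCQ : C ⊆ Q := by
      intro x hx
      by_contra hxQ
      have hpre : IsPreconnected (C ∪ Qᶜ) :=
        IsPreconnected.union x hx hxQ isPreconnected_connectedComponentIn hQcpre
      have hsub : C ∪ Qᶜ ⊆ Ktᶜ := Set.union_subset hCsub hQcK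
      have := hpre.subset_connectedComponentIn (Set.mem_union_left _ hzC) hsub
      exact hbC (this (Set.mem_union_right _ hbQc))
    have hClQ : closure C ⊆ Q := closure_minimal hCQ hQclosed
    have hbcl : b ∉ closure C := fun h => hbQ (hClQ h)
    have hzcl : z ∈ closure C := subset_closure hzC
    have hfrK : ∀ x ∈ closure C, x ∉ C → x ∈ Kt := by
      intro x hxcl hxC
      by_contra hxK
      have hxo : IsOpen (connectedComponentIn Ktᶜ x) := (hKtcl.isOpen_compl).connectedComponentIn
      have hxmem : x ∈ connectedComponentIn Ktᶜ x := mem_connectedComponentIn hxK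
      obtain ⟨y, hy1, hy2⟩ := _root_.mem_closure_iff.1 hxcl _ hxo hxmem
      have h2 : connectedComponentIn Ktᶜ x = connectedComponentIn Ktᶜ y :=
        connectedComponentIn_eq hy1
      have h3 : C = connectedComponentIn Ktᶜ y := connectedComponentIn_eq hy2
      rw [hCdef] at h3
      exact hxC (by rw [hCdef, h3, ← h2]; exact hxmem)
    -- a continuous logarithm of (w-z)/(w-b) on each K i
    have hpathi : ∀ i, ∃ g, ContinuousOn g (K i) ∧
        ∀ w ∈ K i, Complex.exp (g w) = (w - z)/(w - b) := by
      intro i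
      have hop : IsOpen (K i)ᶜ := (hcpt i).isClosed.isOpen_compl
      have hpc : IsPathConnected (K i)ᶜ := (hop.isConnected_iff_isPathConnected).mp (hconn i)
      have hz' : z ∈ (K i)ᶜ := fun h => hz (Set.mem_iUnion.mpr ⟨i, h⟩)
      have hb' : b ∈ (K i)ᶜ := fun h => hbK (Set.mem_iUnion.mpr ⟨i, h⟩)
      obtain ⟨γ, hγ⟩ := hpc.joinedIn z hz' b hb'
      exact exists_log_ratio (hcpt i) γ (fun t => hγ t)
    choose gs hgsc hgsval using hpathi
    -- glue
    set g : ℂ → ℂ := fun w => if h : ∃ i, w ∈ K i then gs h.choose w else 0 with hgdef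
    have hgeq : ∀ i, ∀ w ∈ K i, g w = gs i w := by
      intro i w hw
      have hex : ∃ j, w ∈ K j := ⟨i, hw⟩
      have hj := hex.choose_spec
      have hji : hex.choose = i := by
        by_contra hne
        exact Set.disjoint_left.1 (hdisj hne) hj hw
      rw [hgdef]
      simp only [dif_pos hex, hji]
    have hgval : ∀ w ∈ Kt, Complex.exp (g w) = (w - z)/(w - b) := by
      intro w hw
      obtain ⟨i, hi⟩ := Set.mem_iUnion.1 hw
      rw [hgeq i w hi]
      exact hgsval i w hi
    have hgc : ContinuousOn g Kt := by
      intro w₀ hw₀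
      obtain ⟨i, hw₀i⟩ := Set.mem_iUnion.1 hw₀
      set L : Set ℂ := ⋃ (j : {j : Fin m // j ≠ i}), K j with hLdef
      have hLc : IsCompact L := isCompact_iUnion (fun j => hcpt j)
      have hdisjL : Disjoint (K i) L := by
        rw [hLdef, Set.disjoint_iUnion_right]
        exact fun j => hdisj (Ne.symm j.prop)
      obtain ⟨δ, hδ, hthick⟩ := hdisjL.exists_thickenings (hcpt i) hLc.isClosed
      have hUopen : IsOpen (Metric.thickening δ (K i)) := Metric.isOpen_thickening
      have hw₀U : w₀ ∈ Metric.thickening δ (K i) :=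
        Metric.self_subset_thickening hδ _ hw₀i
      have hKU : Kt ∩ Metric.thickening δ (K i) ⊆ K i := by
        rintro w ⟨hw, hwU⟩
        obtain ⟨j, hj⟩ := Set.mem_iUnion.1 hw
        by_cases hji : j = i
        · rwa [hji] at hj
        · exfalso
          have hwL : w ∈ L := Set.mem_iUnion.mpr ⟨⟨j, hji⟩, hj⟩
          have : w ∈ Metric.thickening δ L := Metric.self_subset_thickening hδ _ hwL
          exact Set.disjoint_left.1 hthick hwU this
      rw [← continuousWithinAt_inter (hUopen.mem_nhds hw₀U)]
      have h1 : ContinuousWithinAt (gs i) (Kt ∩ Metric.thickening δ (K i)) w₀ :=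
        ((hgsc i) w₀ hw₀i).mono hKU
      exact h1.congr (fun w hw => hgeq i w (hKU hw)) (hgeq i w₀ hw₀i)
    -- Tietze extension
    obtain ⟨Gc, hGc⟩ := ContinuousMap.exists_restrict_eq (Y := ℂ) hKtcl ⟨Kt.restrict g, hgc.restrict⟩
    set G : ℂ → ℂ := fun w => Gc w with hGdef
    have hGK : ∀ w ∈ Kt, G w = g w := by
      intro w hw
      have := ContinuousMap.congr_fun hGc ⟨w, hw⟩
      exact this
    -- the global nonvanishing function F
    set F : ℂ → ℂ := Set.piecewise (closure C) (fun w => (w - b) * Complex.exp (G w))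
      (fun w => w - z) with hFdef
    have hFc : Continuous F := by
      refine Continuous.piecewise ?_ ?_ (by continuity)
      · intro a ha
        have ha1 : a ∈ closure C := by
          have := frontier_subset_closure (s := closure C) ha
          rwa [closure_closure] at this
        have ha2 : a ∉ C := by
          intro hC
          have hsub : C ⊆ interior (closure C) := interior_maximal subset_closure hCopen
          exact ha.2 (hsub hC)
        have haK : a ∈ Kt := hfrK a ha1 ha2
        have hab : a - b ≠ 0 := sub_ne_zero.mpr (fun h => hbK (h ▸ haK))
        show (a - b) * Complex.exp (G a) = a - z
        rw [hGK a haK, hgval a haK, mul_comm, div_mul_cancel₀ _ hab]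
      · exact (continuous_id.sub continuous_const).mul (Complex.continuous_exp.comp Gc.continuous)
    have hFne : ∀ w, F w ≠ 0 := by
      intro w
      by_cases hw : w ∈ closure C
      · rw [hFdef, Set.piecewise_eq_of_mem _ _ _ hw]
        exact mul_ne_zero (sub_ne_zero.mpr (fun h => hbcl (h ▸ hw))) (Complex.exp_ne_zero _)
      · rw [hFdef, Set.piecewise_eq_of_notMem _ _ _ hw]
        exact sub_ne_zero.mpr (fun h => hw (h ▸ hzcl))
    -- the big circle
    set R : ℝ := 2*r + ‖z‖ + 1 with hRdef
    have hRpos : 0 < R := by positivity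
    have hsphere : ∀ w ∈ Metric.sphere z R, w ∉ closure C := by
      intro w hwsp hwcl
      have hwQ : w ∈ Q := hClQ hwcl
      have h1 : ‖w‖ ≤ 2*r := by
        calc ‖w‖ ≤ |w.re| + |w.im| := by
              exact Complex.norm_le_abs_re_add_abs_im w
          _ ≤ r + r := add_le_add hwQ.1 hwQ.2
          _ = 2*r := by ring
      have h2 : ‖w - z‖ = R := mem_sphere_iff_norm.1 hwsp
      have h3 : ‖w - z‖ ≤ ‖w‖ + ‖z‖ := norm_sub_le _ _
      rw [h2, hRdef] at h3
      linarith
    obtain ⟨G₂, hG₂c, hG₂⟩ := exists_log_on_closedBall (c := z) hRpos hFc hFne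
    refine no_log_on_sphere (z := z) hRpos
      (hG₂c.mono Metric.sphere_subset_closedBall) (fun w hw => ?_)
    rw [hG₂ w (Metric.sphere_subset_closedBall hw), hFdef,
      Set.piecewise_eq_of_notMem _ _ _ (hsphere w hw)]
  -- conclude
  have hKeq : Ktᶜ = connectedComponentIn Ktᶜ b :=
    Set.Subset.antisymm (fun z hz => main z hz) (connectedComponentIn_subset _ _)
  rw [hKeq]
  exact isConnected_connectedComponentIn_iff.mpr hbK


/-- A finite union of pairwise disjoint compact subsets of `ℂ`, each with connected
complement, is polynomially convex, and its complement is connected. -/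
theorem polyConvex_finite_union_of_connected_compl (m : ℕ) (K : Fin m → Set ℂ)
    (hcpt : ∀ i, IsCompact (K i))
    (hdisj : Pairwise (Function.onFun Disjoint K))
    (hconn : ∀ i, IsConnected (K i)ᶜ) :
    PolyConvex₁ (⋃ i, K i) ∧ IsConnected (⋃ i, K i)ᶜ := by
  have hconn2 := polyConvex_main m K hcpt hdisj hconn
  exact ⟨⟨isCompact_iUnion hcpt,
    fun z hz => exists_sep_poly (isCompact_iUnion hcpt) hconn2.isPreconnected hz⟩, hconn2⟩
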